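/- Fix p0 ∈ (0,1) with p0 ≠ 1/2, and let a₀ = log((1−p0)/p0). Then E(a₀, a₀) = min(p0, 1−p0), and min(p0, 1−p0) > 0. (In particular, the Bayes optimal classifier under 100% adversarial training, whose optimal logit differences are a = b = a₀, has classification error min(p0, 1−p0), strictly greater than the Bayes error 0.) -/
import Mathlib


noncomputable def E (p0 a b : ℝ) : ℝ :=
  p0 * (if a ≥ 0 then 1 else 0) + (1 - p0) * (if b ≤ 0 then 1 else 0)

theorem at_error (p0 : ℝ) (hp0 : 0 < p0) (hp1 : p0 < 1) (hne : p0 ≠ 1 / 2) :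
    E p0 (Real.log ((1 - p0) / p0)) (Real.log ((1 - p0) / p0)) = min p0 (1 - p0) ∧
    0 < min p0 (1 - p0) := by
  have h1 : 0 < 1 - p0 := by linarith
  refine ⟨?_, lt_min hp0 h1⟩
  rcases lt_or_gt_of_ne hne with h | h
  · have hr : 1 < (1 - p0) / p0 := (one_lt_div hp0).2 (by linarith)
    have hl : 0 < Real.log ((1 - p0) / p0) := Real.log_pos hr
    simp [E, hl.le, not_le.2 hl, min_eq_left (by linarith : p0 ≤ 1 - p0)]
  · have hr : (1 - p0) / p0 < 1 := (div_lt_one hp0).2 (by linarith)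
    have hl : Real.log ((1 - p0) / p0) < 0 :=
      Real.log_neg (div_pos h1 hp0) hr
    simp [E, hl.le, not_le.2 hl, min_eq_right (by linarith : 1 - p0 ≤ p0)]
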